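/- Let G and H be graphs with odd Hadwiger numbers oh(G) = s ≥ 2 and oh(H) = t ≥ 2. Then the odd Hadwiger number of the Cartesian product satisfies oh(G □ H) ≥ oh(K_s □ K_t), where K_s and K_t denote complete graphs on s and t vertices. -/

import Mathlib

open SimpleGraph

/-- `H` is an odd minor of `G`: there are pairwise vertex-disjoint subtrees of `G`, one for
each vertex of `H`, and a 2-colouring of the vertices which is proper on each tree, such that
for every edge of `H` there is a monochromatic edge of `G` between the corresponding trees. -/
def IsOddMinorOf {W V : Type*} (H : SimpleGraph W) (G : SimpleGraph V) : Prop :=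
  ∃ (T : W → G.Subgraph) (c : V → Fin 2),
    (∀ w, (T w).coe.IsTree) ∧
    (Pairwise fun w w' => Disjoint (T w).verts (T w').verts) ∧
    (∀ w, ∀ x y, (T w).Adj x y → c x ≠ c y) ∧
    (∀ w w', H.Adj w w' →
      ∃ x y, x ∈ (T w).verts ∧ y ∈ (T w').verts ∧ G.Adj x y ∧ c x = c y)

/-- The odd Hadwiger number of `G`: the largest `r` such that `K_r` is an odd minor of `G`. -/
noncomputable def oddHadwiger {V : Type*} [Fintype V] (G : SimpleGraph V) : ℕ :=
  sSup {r : ℕ | IsOddMinorOf (⊤ : SimpleGraph (Fin r)) G}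

/-- The Cartesian product `G □ H`. -/
def cartProd {α β : Type*} (G : SimpleGraph α) (H : SimpleGraph β) : SimpleGraph (α × β) where
  Adj x y := (x.1 = y.1 ∧ H.Adj x.2 y.2) ∨ (x.2 = y.2 ∧ G.Adj x.1 y.1)
  symm := by
    refine ⟨?_⟩
    rintro x y (⟨h1, h2⟩ | ⟨h1, h2⟩)
    · exact Or.inl ⟨h1.symm, h2.symm⟩
    · exact Or.inr ⟨h1.symm, h2.symm⟩
  loopless := by
    refine ⟨?_⟩
    rintro x (⟨_, h⟩ | ⟨_, h⟩)
    · exact H.irrefl h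
    · exact G.irrefl h

/-- The strong product `G ⊠ H`. -/
def strongProd {α β : Type*} (G : SimpleGraph α) (H : SimpleGraph β) : SimpleGraph (α × β) where
  Adj x y := (x.1 = y.1 ∧ H.Adj x.2 y.2) ∨ (x.2 = y.2 ∧ G.Adj x.1 y.1) ∨
    (G.Adj x.1 y.1 ∧ H.Adj x.2 y.2)
  symm := by
    refine ⟨?_⟩
    rintro x y (⟨h1, h2⟩ | ⟨h1, h2⟩ | ⟨h1, h2⟩)
    · exact Or.inl ⟨h1.symm, h2.symm⟩
    · exact Or.inr (Or.inl ⟨h1.symm, h2.symm⟩)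
    · exact Or.inr (Or.inr ⟨h1.symm, h2.symm⟩)
  loopless := by
    refine ⟨?_⟩
    rintro x (⟨_, h⟩ | ⟨_, h⟩ | ⟨h, _⟩)
    · exact H.irrefl h
    · exact G.irrefl h
    · exact G.irrefl h

/-- The lexicographic product `G ∘ H`. -/
def lexProd {α β : Type*} (G : SimpleGraph α) (H : SimpleGraph β) : SimpleGraph (α × β) where
  Adj x y := G.Adj x.1 y.1 ∨ (x.1 = y.1 ∧ H.Adj x.2 y.2)
  symm := by
    refine ⟨?_⟩
    rintro x y (h | ⟨h1, h2⟩)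
    · exact Or.inl h.symm
    · exact Or.inr ⟨h1.symm, h2.symm⟩
  loopless := by
    refine ⟨?_⟩
    rintro x (h | ⟨_, h⟩)
    · exact G.irrefl h
    · exact H.irrefl h

/-- The direct (tensor) product `G × H`. -/
def dirProd {α β : Type*} (G : SimpleGraph α) (H : SimpleGraph β) : SimpleGraph (α × β) where
  Adj x y := G.Adj x.1 y.1 ∧ H.Adj x.2 y.2
  symm := by
    refine ⟨?_⟩
    rintro x y ⟨h1, h2⟩
    exact ⟨h1.symm, h2.symm⟩
  loopless := by
    refine ⟨?_⟩
    rintro x ⟨h, _⟩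
    exact G.irrefl h

/-- Variant of `IsOddMinorOf` requiring only connectivity of the branch sets. -/
def IsOddMinorConn {W V : Type*} (H : SimpleGraph W) (G : SimpleGraph V) : Prop :=
  ∃ (T : W → G.Subgraph) (c : V → Fin 2),
    (∀ w, (T w).Connected) ∧
    (Pairwise fun w w' => Disjoint (T w).verts (T w').verts) ∧
    (∀ w, ∀ x y, (T w).Adj x y → c x ≠ c y) ∧
    (∀ w w', H.Adj w w' →
      ∃ x y, x ∈ (T w).verts ∧ y ∈ (T w').verts ∧ G.Adj x y ∧ c x = c y)


lemma exists_le_isTree {V : Type*} [Fintype V] :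
    ∀ (G : SimpleGraph V), G.Connected → ∃ T ≤ G, T.IsTree := by
  classical
  have main : ∀ (n : ℕ) (G : SimpleGraph V), G.edgeSet.ncard = n → G.Connected →
      ∃ T ≤ G, T.IsTree := by
    intro n
    induction n using Nat.strong_induction_on with
    | _ n ih =>
      intro G hn hconn
      by_cases hac : G.IsAcyclic
      · exact ⟨G, le_refl _, ⟨hconn, hac⟩⟩
      · simp only [SimpleGraph.IsAcyclic] at hac
        push_neg at hac
        obtain ⟨v, cyc, hcyc⟩ := hac
        cases cyc with
        | nil => exact absurd hcyc (by simp [SimpleGraph.Walk.isCycle_def])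
        | @cons _ w _ hadj pw =>
          have he : s(v, w) ∈ (SimpleGraph.Walk.cons hadj pw).edges := by simp
          have hnb : ¬G.IsBridge s(v, w) := by
            rw [SimpleGraph.isBridge_iff_adj_and_forall_cycle_notMem]
            push_neg
            exact ⟨v, _, hcyc, he⟩
            exact hadj
          have hreach : (G \ SimpleGraph.fromEdgeSet {s(v, w)}).Reachable v w := by
            rw [SimpleGraph.isBridge_iff] at hnb
            push_neg at hnb
            exact hnb
          set G' := G \ SimpleGraph.fromEdgeSet {s(v, w)} with hG'
          have hle : G' ≤ G := sdiff_le
          have hstep : ∀ {a b : V}, G.Adj a b → G'.Reachable a b := by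
            intro a b hab
            by_cases hcase : s(a, b) = s(v, w)
            · rw [Sym2.eq_iff] at hcase
              rcases hcase with ⟨rfl, rfl⟩ | ⟨rfl, rfl⟩
              · exact hreach
              · exact hreach.symm
            · refine SimpleGraph.Adj.reachable ?_
              rw [hG', SimpleGraph.sdiff_adj, SimpleGraph.fromEdgeSet_adj]
              exact ⟨hab, fun hc => hcase hc.1⟩
          have hconn' : G'.Connected := by
            rw [SimpleGraph.connected_iff]
            refine ⟨?_, hconn.nonempty⟩
            intro a b
            obtain ⟨pw2⟩ := hconn.preconnected a b
            induction pw2 with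
            | nil => exact SimpleGraph.Reachable.refl _
            | cons h q ih2 => exact (hstep h).trans ih2
          have hcardlt : G'.edgeSet.ncard < n := by
            rw [← hn]
            refine Set.ncard_lt_ncard ?_ G.edgeSet.toFinite
            refine ⟨SimpleGraph.edgeSet_mono hle, fun hsub => ?_⟩
            have h1 : s(v, w) ∈ G.edgeSet := hadj
            have h2 : s(v, w) ∉ G'.edgeSet := by
              rw [SimpleGraph.mem_edgeSet, hG', SimpleGraph.sdiff_adj]
              rintro ⟨-, hfe⟩
              exact hfe (by simp [hadj.ne])
            exact h2 (hsub h1)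
          obtain ⟨T, hT, hTree⟩ := ih _ hcardlt G' rfl hconn'
          exact ⟨T, hT.trans hle, hTree⟩
  exact fun G => main G.edgeSet.ncard G rfl


lemma subgraph_exists_spanning_tree {V : Type*} [Fintype V] {G : SimpleGraph V}
    (H : G.Subgraph) (h : H.Connected) :
    ∃ H' : G.Subgraph, H' ≤ H ∧ H'.verts = H.verts ∧ H'.coe.IsTree := by
  classical
  haveI : Fintype ↥H.verts := Fintype.ofFinite _
  obtain ⟨T, hTle, hTree⟩ := exists_le_isTree H.coe (SimpleGraph.Subgraph.connected_iff'.mp h)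
  let H' : G.Subgraph :=
    { verts := H.verts
      Adj := fun x y => ∃ (hx : x ∈ H.verts) (hy : y ∈ H.verts), T.Adj ⟨x, hx⟩ ⟨y, hy⟩
      adj_sub := by rintro x y ⟨hx, hy, hT⟩; exact H.adj_sub (hTle hT)
      edge_vert := by rintro x y ⟨hx, hy, hT⟩; exact hx
      symm := by refine ⟨?_⟩; rintro x y ⟨hx, hy, hT⟩; exact ⟨hy, hx, hT.symm⟩ }
  have hcoe : H'.coe = T := by
    ext a b
    exact ⟨fun ⟨hx, hy, h⟩ => h, fun h => ⟨a.2, b.2, h⟩⟩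
  exact ⟨H', ⟨subset_rfl, fun x y ⟨hx, hy, hT⟩ => hTle hT⟩, rfl, hcoe ▸ hTree⟩

lemma isOddMinorOf_of_conn {W V : Type*} [Fintype V] {H : SimpleGraph W} {G : SimpleGraph V}
    (h : IsOddMinorConn H G) : IsOddMinorOf H G := by
  obtain ⟨T, c, hconn, hdisj, hprop, hedge⟩ := h
  choose T' hle hverts htree using fun w => subgraph_exists_spanning_tree (T w) (hconn w)
  refine ⟨T', c, htree, ?_, ?_, ?_⟩
  · intro w w' hne
    rw [hverts w, hverts w']
    exact hdisj hne
  · intro w x y hadj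
    exact hprop w x y ((hle w).2 hadj)
  · intro w w' hadj
    obtain ⟨x, y, hx, hy, hG, hc⟩ := hedge w w' hadj
    exact ⟨x, y, (hverts w).symm ▸ hx, (hverts w').symm ▸ hy, hG, hc⟩

lemma conn_of_isOddMinorOf {W V : Type*} {H : SimpleGraph W} {G : SimpleGraph V}
    (h : IsOddMinorOf H G) : IsOddMinorConn H G := by
  obtain ⟨T, c, htree, hdisj, hprop, hedge⟩ := h
  exact ⟨T, c, fun w => SimpleGraph.Subgraph.connected_iff'.mpr (htree w).isConnected,
    hdisj, hprop, hedge⟩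

lemma subgraph_map_connected {V V' : Type*} {G : SimpleGraph V} {G' : SimpleGraph V'}
    (f : G →g G') {H : G.Subgraph} (h : H.Connected) : (H.map f).Connected := by
  rw [SimpleGraph.Subgraph.connected_iff]
  constructor
  · rw [SimpleGraph.Subgraph.preconnected_iff]
    rintro ⟨x, u, hu, rfl⟩ ⟨y, v, hv, rfl⟩
    let φ : H.coe →g (H.map f).coe :=
      { toFun := fun a => ⟨f a.1, ⟨a.1, a.2, rfl⟩⟩
        map_rel' := fun {a b} hab => ⟨a.1, b.1, hab, rfl, rfl⟩ }
    exact SimpleGraph.Reachable.map φ (h.coe.preconnected ⟨u, hu⟩ ⟨v, hv⟩)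
  · obtain ⟨u, hu⟩ := h.nonempty
    exact ⟨f u, u, hu, rfl⟩


lemma isOddMinorConn_trans {U W V : Type*} {F : SimpleGraph U} {H : SimpleGraph W}
    {G : SimpleGraph V} (hFH : IsOddMinorConn F H) (hHG : IsOddMinorConn H G) :
    IsOddMinorConn F G := by
  classical
  obtain ⟨S, d, hSconn, hSdisj, hSprop, hSedge⟩ := hFH
  obtain ⟨T, c, hTconn, hTdisj, hTprop, hTedge⟩ := hHG
  choose p q hp hq hpq hcpq using hTedge
  have huniq : ∀ {x : V} {w w' : W}, x ∈ (T w).verts → x ∈ (T w').verts → w = w' := by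
    intro x w w' hx hx'
    by_contra hne
    exact Set.disjoint_left.mp (hTdisj hne) hx hx'
  let c' : V → Fin 2 := fun x =>
    if h : ∃ w, x ∈ (T w).verts then c x + d h.choose else c x
  have hc' : ∀ {x : V} {w : W}, x ∈ (T w).verts → c' x = c x + d w := by
    intro x w hx
    have hex : ∃ w, x ∈ (T w).verts := ⟨w, hx⟩
    simp only [c', dif_pos hex]
    rw [huniq hex.choose_spec hx]
  let Uf : U → G.Subgraph := fun f =>
    { verts := ⋃ w ∈ (S f).verts, (T w).verts
      Adj := fun x y =>
        (∃ w ∈ (S f).verts, (T w).Adj x y) ∨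
        (∃ w w', ∃ h : (S f).Adj w w',
          (x = p w w' ((S f).adj_sub h) ∧ y = q w w' ((S f).adj_sub h)) ∨
          (y = p w w' ((S f).adj_sub h) ∧ x = q w w' ((S f).adj_sub h)))
      adj_sub := by
        rintro x y (⟨w, hw, hadj⟩ | ⟨w, w', h, (⟨rfl, rfl⟩ | ⟨rfl, rfl⟩)⟩)
        · exact (T w).adj_sub hadj
        · exact hpq w w' _
        · exact (hpq w w' _).symm
      edge_vert := by
        rintro x y (⟨w, hw, hadj⟩ | ⟨w, w', h, (⟨rfl, -⟩ | ⟨-, rfl⟩)⟩)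
        · exact Set.mem_biUnion hw ((T w).edge_vert hadj)
        · exact Set.mem_biUnion ((S f).edge_vert h) (hp w w' _)
        · exact Set.mem_biUnion ((S f).edge_vert h.symm) (hq w w' _)
      symm := by
        refine ⟨?_⟩
        rintro x y (⟨w, hw, hadj⟩ | ⟨w, w', h, hcase⟩)
        · exact Or.inl ⟨w, hw, hadj.symm⟩
        · exact Or.inr ⟨w, w', h, hcase.symm⟩ }
  have hUverts : ∀ f (w : W), w ∈ (S f).verts → ∀ {x : V}, x ∈ (T w).verts →
      x ∈ (Uf f).verts := fun f w hw {x} hx => Set.mem_biUnion hw hx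
  refine ⟨Uf, c', ?_, ?_, ?_, ?_⟩
  · -- connectivity
    intro f
    have hTle : ∀ w, w ∈ (S f).verts → T w ≤ Uf f := by
      intro w hw
      exact ⟨fun x hx => Set.mem_biUnion hw hx, fun x y hxy => Or.inl ⟨w, hw, hxy⟩⟩
    have reachT : ∀ (w : W) (hw : w ∈ (S f).verts) (x y : V) (hx : x ∈ (T w).verts)
        (hy : y ∈ (T w).verts),
        (Uf f).coe.Reachable ⟨x, (hTle w hw).1 hx⟩ ⟨y, (hTle w hw).1 hy⟩ :=
      fun w hw x y hx hy =>
        SimpleGraph.Reachable.map (SimpleGraph.Subgraph.inclusion (hTle w hw))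
          ((hTconn w).coe.preconnected ⟨x, hx⟩ ⟨y, hy⟩)
    have key : ∀ {a b : ↥(S f).verts} (pw : (S f).coe.Walk a b) (x y : V)
        (hx : x ∈ (T (a : W)).verts) (hy : y ∈ (T (b : W)).verts),
        (Uf f).coe.Reachable ⟨x, hUverts f _ a.2 hx⟩ ⟨y, hUverts f _ b.2 hy⟩ := by
      intro a b pw
      induction pw with
      | @nil a => intro x y hx hy; exact reachT _ a.2 x y hx hy
      | @cons a m b hadj pw ih =>
        intro x y hx hy
        have hA : (S f).Adj (a : W) (m : W) := hadj
        have hbr : (Uf f).Adj (p (a : W) (m : W) ((S f).adj_sub hA))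
            (q (a : W) (m : W) ((S f).adj_sub hA)) :=
          Or.inr ⟨(a : W), (m : W), hA, Or.inl ⟨rfl, rfl⟩⟩
        have hP := hp (a : W) (m : W) ((S f).adj_sub hA)
        have hQ := hq (a : W) (m : W) ((S f).adj_sub hA)
        refine (reachT (a : W) a.2 x (p (a : W) (m : W) ((S f).adj_sub hA)) hx hP).trans ?_
        refine (SimpleGraph.Adj.reachable
          (show (Uf f).coe.Adj ⟨p (a : W) (m : W) ((S f).adj_sub hA), hUverts f _ a.2 hP⟩
              ⟨q (a : W) (m : W) ((S f).adj_sub hA), hUverts f _ m.2 hQ⟩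
            from hbr)).trans ?_
        exact ih (q (a : W) (m : W) ((S f).adj_sub hA)) y hQ hy
    rw [SimpleGraph.Subgraph.connected_iff]
    constructor
    · rw [SimpleGraph.Subgraph.preconnected_iff]
      rintro ⟨x, hx⟩ ⟨y, hy⟩
      obtain ⟨w, hw, hxw⟩ := Set.mem_iUnion₂.mp hx
      obtain ⟨w', hw', hyw⟩ := Set.mem_iUnion₂.mp hy
      obtain ⟨pw⟩ := (hSconn f).coe.preconnected ⟨w, hw⟩ ⟨w', hw'⟩
      exact key pw x y hxw hyw
    · obtain ⟨w, hw⟩ := (hSconn f).nonempty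
      obtain ⟨x, hx⟩ := (hTconn w).nonempty
      exact ⟨x, Set.mem_biUnion hw hx⟩
  · -- disjointness
    intro f f' hne
    rw [Set.disjoint_left]
    intro x hx hx'
    obtain ⟨w, hw, hxw⟩ := Set.mem_iUnion₂.mp hx
    obtain ⟨w', hw', hxw'⟩ := Set.mem_iUnion₂.mp hx'
    obtain rfl : w = w' := huniq hxw hxw'
    exact Set.disjoint_left.mp (hSdisj hne) hw hw'
  · -- properness
    rintro f x y (⟨w, hw, hadj⟩ | ⟨w, w', h, (⟨rfl, rfl⟩ | ⟨rfl, rfl⟩)⟩)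
    · rw [hc' ((T w).edge_vert hadj), hc' ((T w).edge_vert hadj.symm)]
      intro heq
      exact hTprop w x y hadj (add_right_cancel heq)
    · rw [hc' (hp w w' _), hc' (hq w w' _), hcpq w w' _]
      intro heq
      exact hSprop f w w' h (add_left_cancel heq)
    · rw [hc' (hq w w' _), hc' (hp w w' _), hcpq w w' _]
      intro heq
      exact hSprop f w w' h (add_left_cancel heq).symm
  · -- edges
    intro f f' hadj
    obtain ⟨u, v, hu, hv, hH, hd⟩ := hSedge f f' hadj
    refine ⟨p u v hH, q u v hH, hUverts f u hu (hp u v hH), hUverts f' v hv (hq u v hH),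
      hpq u v hH, ?_⟩
    rw [hc' (hp u v hH), hc' (hq u v hH), hcpq u v hH, hd]


lemma isOddMinorConn_cartProd {α β V W : Type*}
    {A : SimpleGraph α} {B : SimpleGraph β} {G : SimpleGraph V} {H : SimpleGraph W}
    (hA : IsOddMinorConn A G) (hB : IsOddMinorConn B H) :
    IsOddMinorConn (cartProd A B) (cartProd G H) := by
  classical
  obtain ⟨T, c, hTconn, hTdisj, hTprop, hTedge⟩ := hA
  obtain ⟨S, d, hSconn, hSdisj, hSprop, hSedge⟩ := hB
  choose xr hxr using fun a => (hTconn a).nonempty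
  choose yr hyr using fun b => (hSconn b).nonempty
  have huniqT : ∀ {x : V} {a a' : α}, x ∈ (T a).verts → x ∈ (T a').verts → a = a' := by
    intro x a a' h1 h2
    by_contra hne
    exact Set.disjoint_left.mp (hTdisj hne) h1 h2
  have huniqS : ∀ {y : W} {b b' : β}, y ∈ (S b).verts → y ∈ (S b').verts → b = b' := by
    intro y b b' h1 h2
    by_contra hne
    exact Set.disjoint_left.mp (hSdisj hne) h1 h2
  let colHom : α → (H →g cartProd G H) := fun a =>
    { toFun := fun u => (xr a, u)
      map_rel' := fun h => Or.inl ⟨rfl, h⟩ }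
  let rowHom : β → (G →g cartProd G H) := fun b =>
    { toFun := fun v => (v, yr b)
      map_rel' := fun h => Or.inr ⟨rfl, h⟩ }
  let U : α × β → (cartProd G H).Subgraph := fun ab =>
    (S ab.2).map (colHom ab.1) ⊔ (T ab.1).map (rowHom ab.2)
  refine ⟨U, fun z => c z.1 + d z.2, ?_, ?_, ?_, ?_⟩
  · intro ab
    refine Subgraph.connected_sup (subgraph_map_connected _ (hSconn ab.2)).preconnected
      (subgraph_map_connected _ (hTconn ab.1)).preconnected ?_
    exact ⟨(xr ab.1, yr ab.2), ⟨yr ab.2, hyr ab.2, rfl⟩, ⟨xr ab.1, hxr ab.1, rfl⟩⟩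
  · rintro ⟨a, b⟩ ⟨a', b'⟩ hne
    rw [Set.disjoint_left]
    rintro ⟨x, y⟩ hz hz'
    have hcase : ∀ {a₀ : α} {b₀ : β}, (x, y) ∈ (U (a₀, b₀)).verts →
        (x = xr a₀ ∧ y ∈ (S b₀).verts) ∨ (x ∈ (T a₀).verts ∧ y = yr b₀) := by
      rintro a₀ b₀ (⟨u, hu, heq⟩ | ⟨v, hv, heq⟩)
      · rw [Prod.mk.injEq] at heq
        exact Or.inl ⟨heq.1.symm, heq.2 ▸ hu⟩
      · rw [Prod.mk.injEq] at heq
        exact Or.inr ⟨heq.1 ▸ hv, heq.2.symm⟩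
    have hab : a = a' ∧ b = b' := by
      rcases hcase hz with ⟨rfl, hy⟩ | ⟨hx, rfl⟩ <;>
        rcases hcase hz' with ⟨hx', hy'⟩ | ⟨hx', hy'⟩
      · exact ⟨huniqT (hxr a) (hx' ▸ hxr a'), huniqS hy hy'⟩
      · exact ⟨huniqT (hxr a) hx', huniqS hy (hy' ▸ hyr b')⟩
      · exact ⟨huniqT hx (hx' ▸ hxr a'), huniqS (hyr b) hy'⟩
      · exact ⟨huniqT hx hx', huniqS (hyr b) (hy' ▸ hyr b')⟩
    exact hne (Prod.ext hab.1 hab.2)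
  · rintro ⟨a, b⟩ z z' (⟨u, u', hadj, heq, heq'⟩ | ⟨v, v', hadj, heq, heq'⟩)
    · subst heq; subst heq'
      intro hcc
      exact hSprop b u u' hadj (add_left_cancel hcc)
    · subst heq; subst heq'
      intro hcc
      exact hTprop a v v' hadj (add_right_cancel hcc)
  · rintro ⟨a, b⟩ ⟨a', b'⟩ (⟨heq, hBadj⟩ | ⟨heq, hAadj⟩)
    · cases heq
      obtain ⟨u, v, hu, hv, hH, hd⟩ := hSedge b b' hBadj
      refine ⟨(xr a, u), (xr a, v), Or.inl ⟨u, hu, rfl⟩, Or.inl ⟨v, hv, rfl⟩,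
        Or.inl ⟨rfl, hH⟩, ?_⟩
      simp only [hd]
    · cases heq
      obtain ⟨x, y, hx, hy, hG, hc⟩ := hTedge a a' hAadj
      refine ⟨(x, yr b), (y, yr b), Or.inr ⟨x, hx, rfl⟩, Or.inr ⟨y, hy, rfl⟩,
        Or.inr ⟨rfl, hG⟩, ?_⟩
      simp only [hc]


lemma oddMinor_card_bound {V : Type*} [Fintype V] {G : SimpleGraph V} {r : ℕ}
    (h : IsOddMinorOf (⊤ : SimpleGraph (Fin r)) G) : r ≤ Fintype.card V := by
  obtain ⟨T, c, htree, hdisj, -, -⟩ := h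
  have hne : ∀ i : Fin r, ∃ v : V, v ∈ (T i).verts := by
    intro i
    obtain ⟨⟨v, hv⟩⟩ := (htree i).isConnected.nonempty
    exact ⟨v, hv⟩
  choose x hx using hne
  have hinj : Function.Injective x := by
    intro i j hij
    by_contra hne'
    exact Set.disjoint_left.mp (hdisj hne') (hx i) (hij ▸ hx j)
  simpa using Fintype.card_le_of_injective x hinj

lemma zero_oddMinor {V : Type*} {G : SimpleGraph V} :
    IsOddMinorOf (⊤ : SimpleGraph (Fin 0)) G := by
  refine ⟨fun i => i.elim0, fun _ => 0, fun i => i.elim0, ?_, fun i => i.elim0,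
    fun i => i.elim0⟩
  intro i
  exact i.elim0

lemma oddHadwiger_mem {V : Type*} [Fintype V] (G : SimpleGraph V) :
    IsOddMinorOf (⊤ : SimpleGraph (Fin (oddHadwiger G))) G := by
  have hset := Nat.sSup_mem (s := {r : ℕ | IsOddMinorOf (⊤ : SimpleGraph (Fin r)) G})
    ⟨0, zero_oddMinor⟩ ⟨Fintype.card V, fun r hr => oddMinor_card_bound hr⟩
  exact hset

theorem stmt_0 {V W : Type*} [Fintype V] [Fintype W]
    (G : SimpleGraph V) (H : SimpleGraph W) (s t : ℕ)
    (hs : oddHadwiger G = s) (hs2 : 2 ≤ s)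
    (ht : oddHadwiger H = t) (ht2 : 2 ≤ t) :
    oddHadwiger (cartProd G H) ≥
      oddHadwiger (cartProd (⊤ : SimpleGraph (Fin s)) (⊤ : SimpleGraph (Fin t))) := by
  have h1 : IsOddMinorConn (⊤ : SimpleGraph (Fin s)) G :=
    conn_of_isOddMinorOf (hs ▸ oddHadwiger_mem G)
  have h2 : IsOddMinorConn (⊤ : SimpleGraph (Fin t)) H :=
    conn_of_isOddMinorOf (ht ▸ oddHadwiger_mem H)
  have h3 := conn_of_isOddMinorOf (oddHadwiger_mem
    (cartProd (⊤ : SimpleGraph (Fin s)) (⊤ : SimpleGraph (Fin t))))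
  have h4 := isOddMinorConn_cartProd h1 h2
  have h5 := isOddMinorOf_of_conn (isOddMinorConn_trans h3 h4)
  exact le_csSup ⟨Fintype.card (V × W), fun r hr => oddMinor_card_bound hr⟩ h5
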